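/- Let $F : \mathbb{R}^p \to \mathbb{R}$ be twice continuously differentiable and suppose all eigenvalues of $\nabla^2 F(\theta)$ lie in $[m, L]$ for all $\theta$, with $0 < m \le L$. Fix $0 < \alpha \le 1/L$. If sequences $(\widehat\theta^{(t)})$, $(\widehat\theta^{(t)}_-)$, $(\widetilde\theta^{(t)})$ in $\mathbb{R}^p$ satisfy $\widetilde\theta^{(t)} = \widetilde\theta^{(t-1)} - \alpha\big(\nabla F(\widehat\theta^{(t-1)}) + \nabla^2 F(\widehat\theta^{(t-1)})[\widetilde\theta^{(t-1)} - \widehat\theta^{(t-1)}]\big)$ and $\widehat\theta^{(t)}_- = \widehat\theta^{(t-1)}_- - \alpha\nabla F(\widehat\theta^{(t-1)}_-)$, then for every $t\ge1$ there exists $\theta'$ on the segment between $\widehat\theta^{(t-1)}$ and $\widehat\theta^{(t-1)}_-$ such that $\|\widehat\theta^{(t)}_- - \widetilde\theta^{(t)}\|_2 \le (1-\alpha m)\|\widehat\theta^{(t-1)}_- - \widetilde\theta^{(t-1)}\|_2 + \alpha\|(\nabla^2 F(\theta') - \nabla^2 F(\widehat\theta^{(t-1)}))[\widehat\theta^{(t-1)}_-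 - \widehat\theta^{(t-1)}]\|_2$. -/

import Mathlib

open scoped RealInnerProductSpace

open Set

/-- Operator norm bound for a symmetric nonnegative operator with quadratic form
bounded by `c‖·‖²`. -/
lemma aux_sym_norm {E : Type*} [NormedAddCommGroup E] [InnerProductSpace ℝ E]
    (S : E →L[ℝ] E) (c : ℝ)
    (hsym : ∀ v w : E, ⟪S v, w⟫ = ⟪v, S w⟫)
    (hpos : ∀ v : E, 0 ≤ ⟪v, S v⟫)
    (hub : ∀ v : E, ⟪v, S v⟫ ≤ c * ‖v‖ ^ 2) (w : E) :
    ‖S w‖ ≤ c * ‖w‖ := by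
  rcases eq_or_ne w 0 with rfl | hw
  · simp
  have hw' : (0:ℝ) < ‖w‖ := norm_pos_iff.2 hw
  have hc : 0 ≤ c := by
    have h1 := hpos w; have h2 := hub w
    nlinarith [pow_pos hw' 2]
  rcases eq_or_ne (S w) 0 with hSw | hSw
  · rw [hSw, norm_zero]; positivity
  have hSw' : (0:ℝ) < ‖S w‖ := norm_pos_iff.2 hSw
  set v := (‖w‖ / ‖S w‖) • S w with hv
  have hnv : ‖v‖ = ‖w‖ := by
    rw [hv, norm_smul, Real.norm_eq_abs, abs_of_pos (by positivity)]
    field_simp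
  have hvSw : ⟪v, S w⟫ = ‖w‖ * ‖S w‖ := by
    rw [hv, real_inner_smul_left, real_inner_self_eq_norm_sq]
    field_simp
  have hcomm : ⟪w, S v⟫ = ⟪v, S w⟫ := (real_inner_comm (S v) w).trans (hsym v w)
  have e1 : ⟪v + w, S (v + w)⟫ = ⟪v, S v⟫ + 2 * ⟪v, S w⟫ + ⟪w, S w⟫ := by
    simp only [map_add, inner_add_left, inner_add_right]
    rw [hcomm]; ring
  have e2 : ⟪v - w, S (v - w)⟫ = ⟪v, S v⟫ - 2 * ⟪v, S w⟫ + ⟪w, S w⟫ := by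
    simp only [map_sub, inner_sub_left, inner_sub_right]
    rw [hcomm]; ring
  have hbound : ‖v + w‖ ^ 2 ≤ 4 * ‖w‖ ^ 2 := by
    have := norm_add_le v w
    nlinarith [norm_nonneg (v + w)]
  have key : 4 * ⟪v, S w⟫ ≤ 4 * (c * ‖w‖ ^ 2) := by
    have h1 := hub (v + w)
    have h2 := hpos (v - w)
    nlinarith
  rw [hvSw] at key
  nlinarith

/-- The gradient of a `C²` function is differentiable and its derivative (the Hessian)
is symmetric. -/
lemma aux_grad {p : ℕ} (F : EuclideanSpace ℝ (Fin p) → ℝ) (hF : ContDiff ℝ 2 F) :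
    (∀ x, HasFDerivAt (gradient F) (fderiv ℝ (gradient F) x) x) ∧
    (∀ x v w, ⟪fderiv ℝ (gradient F) x v, w⟫ = ⟪v, fderiv ℝ (gradient F) x w⟫) := by
  have hd : ContDiff ℝ 1 (fderiv ℝ F) := hF.fderiv_right (by norm_num)
  have hdd : ∀ x, HasFDerivAt (fderiv ℝ F) (fderiv ℝ (fderiv ℝ F) x) x :=
    fun x => (hd.differentiable (by norm_num) x).hasFDerivAt
  have hF1 : ∀ y, HasFDerivAt F (fderiv ℝ F y) y :=
    fun y => (hF.differentiable (by norm_num) y).hasFDerivAt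
  set eL : StrongDual ℝ (EuclideanSpace ℝ (Fin p)) →L[ℝ] EuclideanSpace ℝ (Fin p) :=
    (InnerProductSpace.toDual ℝ
      (EuclideanSpace ℝ (Fin p))).symm.toContinuousLinearEquiv.toContinuousLinearMap with heL
  have heq : gradient F = fun x => eL (fderiv ℝ F x) := rfl
  have hgd : ∀ x, HasFDerivAt (gradient F) (eL.comp (fderiv ℝ (fderiv ℝ F) x)) x := by
    intro x
    rw [heq]
    exact eL.hasFDerivAt.comp x (hdd x)
  have hfd : ∀ x, fderiv ℝ (gradient F) x = eL.comp (fderiv ℝ (fderiv ℝ F) x) :=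
    fun x => (hgd x).fderiv
  constructor
  · intro x
    rw [hfd x]; exact hgd x
  · intro x v w
    rw [hfd x]
    have hsymm := second_derivative_symmetric hF1 (hdd x) v w
    have h1 : ∀ u z : EuclideanSpace ℝ (Fin p),
        ⟪(eL.comp (fderiv ℝ (fderiv ℝ F) x)) u, z⟫ = (fderiv ℝ (fderiv ℝ F) x) u z := by
      intro u z
      rw [ContinuousLinearMap.comp_apply]
      exact InnerProductSpace.toDual_symm_apply
    rw [h1 v w, real_inner_comm, h1 w v]
    exact hsymm

/-- Directional mean value inequality for the gradient of a `C²` function. -/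
lemma aux_mvt {p : ℕ} (F : EuclideanSpace ℝ (Fin p) → ℝ) (hF : ContDiff ℝ 2 F)
    (a b : EuclideanSpace ℝ (Fin p)) :
    ∃ θ' ∈ segment ℝ a b,
      ‖gradient F b - gradient F a - fderiv ℝ (gradient F) a (b - a)‖ ≤
        ‖(fderiv ℝ (gradient F) θ' - fderiv ℝ (gradient F) a) (b - a)‖ := by
  obtain ⟨hdiff, -⟩ := aux_grad F hF
  set H := fun θ => fderiv ℝ (gradient F) θ with hH
  set v := b - a with hvdef
  set D := gradient F b - gradient F a - H a v with hD
  rcases eq_or_ne D 0 with hD0 | hD0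
  · exact ⟨a, left_mem_segment ℝ a b, by rw [hD0]; simp⟩
  have hDn : (0:ℝ) < ‖D‖ := norm_pos_iff.2 hD0
  set u := ‖D‖⁻¹ • D with hu
  have hun : ‖u‖ = 1 := by
    rw [hu, norm_smul, Real.norm_eq_abs, abs_of_pos (by positivity)]
    field_simp
  set g : ℝ → ℝ := fun s => ⟪u, gradient F (a + s • v)⟫ - s * ⟪u, H a v⟫ with hg
  set g' : ℝ → ℝ := fun s => ⟪u, H (a + s • v) v⟫ - ⟪u, H a v⟫ with hg'
  have hder : ∀ s : ℝ, HasDerivAt g (g' s) s := by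
    intro s
    have h1 : HasDerivAt (fun s : ℝ => a + s • v) v s := by
      simpa using ((hasDerivAt_id s).smul_const v).const_add a
    have h2 : HasDerivAt (fun s : ℝ => gradient F (a + s • v)) (H (a + s • v) v) s :=
      by have := (hdiff (a + s • v)).comp_hasDerivAt s h1; exact this
    have h3 : HasDerivAt (fun s : ℝ => ⟪u, gradient F (a + s • v)⟫)
        ⟪u, H (a + s • v) v⟫ s := by
      have := (innerSL ℝ u).hasFDerivAt.comp_hasDerivAt s h2
      exact this
    exact h3.sub (hasDerivAt_mul_const ⟪u, H a v⟫)
  have hcont : ContinuousOn g (Icc (0:ℝ) 1) :=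
    fun s _ => ((hder s).continuousAt).continuousWithinAt
  obtain ⟨c, hc, hceq⟩ := exists_hasDerivAt_eq_slope g g' zero_lt_one hcont
    (fun s _ => hder s)
  have hg10 : (g 1 - g 0) / (1 - 0) = ‖D‖ := by
    have h1 : g 1 - g 0 = ⟪u, D⟫ := by
      simp only [hg, one_smul, zero_smul, add_zero, one_mul, zero_mul, sub_zero]
      rw [show a + v = b by rw [hvdef]; abel]
      rw [hD, inner_sub_right, inner_sub_right]
      ring
    have h2 : ⟪u, D⟫ = ‖D‖ := by
      rw [hu, real_inner_smul_left, real_inner_self_eq_norm_sq]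
      field_simp
    rw [h1, h2]; norm_num
  rw [hg10] at hceq
  refine ⟨a + c • v, ?_, ?_⟩
  · rw [segment_eq_image']
    exact ⟨c, Ioo_subset_Icc_self hc, rfl⟩
  · have h3 : ‖D‖ = ⟪u, (H (a + c • v) - H a) v⟫ := by
      rw [← hceq]
      simp only [hg', ContinuousLinearMap.sub_apply, inner_sub_right]
    calc ‖D‖ = ⟪u, (H (a + c • v) - H a) v⟫ := h3
      _ ≤ ‖u‖ * ‖(H (a + c • v) - H a) v‖ := real_inner_le_norm _ _
      _ = ‖(H (a + c • v) - H a) v‖ := by rw [hun, one_mul]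

/-- One-step error contraction for the IACV linearized update versus
the true leave-one-out gradient descent update. -/
theorem stmt2 {p : ℕ} (F : EuclideanSpace ℝ (Fin p) → ℝ) (m L α : ℝ)
    (hF : ContDiff ℝ 2 F) (hm : 0 < m) (hmL : m ≤ L)
    (hα : 0 < α) (hαL : α ≤ 1 / L)
    (hH : ∀ θ v, m * ‖v‖ ^ 2 ≤ ⟪v, fderiv ℝ (gradient F) θ v⟫ ∧
          ⟪v, fderiv ℝ (gradient F) θ v⟫ ≤ L * ‖v‖ ^ 2)
    (θh θm θt : ℕ → EuclideanSpace ℝ (Fin p))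
    (hupd : ∀ t ≥ 1, θt t = θt (t - 1) -
      α • (gradient F (θh (t - 1)) +
        fderiv ℝ (gradient F) (θh (t - 1)) (θt (t - 1) - θh (t - 1))))
    (hupd2 : ∀ t ≥ 1, θm t = θm (t - 1) - α • gradient F (θm (t - 1))) :
    ∀ t ≥ 1, ∃ θ' ∈ segment ℝ (θh (t - 1)) (θm (t - 1)),
      ‖θm t - θt t‖ ≤ (1 - α * m) * ‖θm (t - 1) - θt (t - 1)‖ +
        α * ‖(fderiv ℝ (gradient F) θ' - fderiv ℝ (gradient F) (θh (t - 1)))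
              (θm (t - 1) - θh (t - 1))‖ := by
  intro t ht
  obtain ⟨-, hsymm⟩ := aux_grad F hF
  set a := θh (t - 1) with ha
  set b := θm (t - 1) with hb
  set ct := θt (t - 1) with hct
  set A := fderiv ℝ (gradient F) a with hA
  set D := gradient F b - gradient F a - A (b - a) with hD
  set w := b - ct with hw
  obtain ⟨θ', hθ'seg, hθ'⟩ := aux_mvt F hF a b
  refine ⟨θ', hθ'seg, ?_⟩
  have halg : θm t - θt t = (w - α • A w) - α • D := by
    rw [hupd t ht, hupd2 t ht, ← ha, ← hb, ← hct, ← hA]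
    rw [hD, hw]
    rw [map_sub A ct a, map_sub A b ct, map_sub A b a]
    module
  have hL : (0:ℝ) < L := lt_of_lt_of_le hm hmL
  have hαL' : α * L ≤ 1 := by
    rw [le_div_iff₀ hL] at hαL; linarith
  -- bound ‖w - α • A w‖
  set S : EuclideanSpace ℝ (Fin p) →L[ℝ] EuclideanSpace ℝ (Fin p) :=
    ContinuousLinearMap.id ℝ _ - α • A with hS
  have hSapp : ∀ z, S z = z - α • A z := by
    intro z
    simp [hS, ContinuousLinearMap.sub_apply, ContinuousLinearMap.smul_apply]
  have hSinner : ∀ z, ⟪z, S z⟫ = ‖z‖ ^ 2 - α * ⟪z, A z⟫ := by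
    intro z
    rw [hSapp, inner_sub_right, real_inner_smul_right, real_inner_self_eq_norm_sq]
  have hSnorm : ‖S w‖ ≤ (1 - α * m) * ‖w‖ := by
    apply aux_sym_norm
    · intro x y
      rw [hSapp, hSapp, inner_sub_left, inner_sub_right,
        real_inner_smul_left, real_inner_smul_right, hsymm a x y]
    · intro z
      rw [hSinner]
      have h1 := (hH a z).2
      nlinarith [sq_nonneg ‖z‖]
    · intro z
      rw [hSinner]
      have h1 := (hH a z).1
      nlinarith
  have hnorm : ‖θm t - θt t‖ ≤ ‖S w‖ + α * ‖D‖ := by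
    rw [halg, ← hSapp]
    calc ‖S w - α • D‖ ≤ ‖S w‖ + ‖α • D‖ := norm_sub_le _ _
      _ = ‖S w‖ + α * ‖D‖ := by
          rw [norm_smul, Real.norm_eq_abs, abs_of_pos hα]
  have hDbound : ‖D‖ ≤ ‖(fderiv ℝ (gradient F) θ' - A) (b - a)‖ := hθ'
  calc ‖θm t - θt t‖ ≤ ‖S w‖ + α * ‖D‖ := hnorm
    _ ≤ (1 - α * m) * ‖w‖ + α * ‖(fderiv ℝ (gradient F) θ' - A) (b - a)‖ := by
        have := mul_le_mul_of_nonneg_left hDbound (le_of_lt hα)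
        linarith
    _ = (1 - α * m) * ‖b - ct‖ + α * ‖(fderiv ℝ (gradient F) θ' - A) (b - a)‖ := by
        rw [hw]
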